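/- Let H be the k-dimensional hypercube graph on n = 2^k vertices (k ≥ 1): vertices are the elements of {0,1}^k and two vertices are adjacent iff they differ in exactly one coordinate. Then g(H, (2 − k)·𝟙) = n/2, h(H) = n/2, and bw(H) = n/2; in particular h(H) = bw(H). -/

import Mathlib

open Matrix BigOperators Finset

noncomputable section

variable {V : Type*} [Fintype V] [DecidableEq V]

/-- Adjacency matrix of a graph on a finite vertex type, with real entries. -/
def adjA (G : SimpleGraph V) [DecidableRel G.Adj] : Matrix V V ℝ :=
  Matrix.of fun i j => if G.Adj i j then (1 : ℝ) else 0

/-- A bisection vector: entries in `{+1, -1}` summing to zero. -/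
def IsBisection (x : V → ℝ) : Prop :=
  (∀ i, x i = 1 ∨ x i = -1) ∧ ∑ i, x i = 0

/-- Cut width of a `±1` vector: `∑_{{i,j}∈E} (1 - x_i x_j)/2`, written as a sum
over ordered pairs (each edge counted twice, hence the `/4`). -/
def cw (G : SimpleGraph V) [DecidableRel G.Adj] (x : V → ℝ) : ℝ :=
  (∑ i, ∑ j, adjA G i j * (1 - x i * x j)) / 4

/-- Bisection width: minimum cut width over all bisection vectors. -/
def bw (G : SimpleGraph V) [DecidableRel G.Adj] : ℝ :=
  sInf {c | ∃ x : V → ℝ, IsBisection x ∧ cw G x = c}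

/-- `λ_S(B)`: supremum of the Rayleigh quotient of `B` over nonzero vectors of
coordinate sum zero. -/
def lamS (B : Matrix V V ℝ) : ℝ :=
  sSup {r | ∃ x : V → ℝ, x ≠ 0 ∧ ∑ i, x i = 0 ∧
    r = (x ⬝ᵥ B.mulVec x) / (∑ i, (x i) ^ 2)}

/-- Sum of all entries of a matrix. -/
def msum (M : Matrix V V ℝ) : ℝ := ∑ i, ∑ j, M i j

/-- Boppana's function `g(G,d)`. -/
def gB (G : SimpleGraph V) [DecidableRel G.Adj] (d : V → ℝ) : ℝ :=
  (msum (adjA G + Matrix.diagonal d)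
    - (Fintype.card V : ℝ) * lamS (adjA G + Matrix.diagonal d)) / 4

/-- Boppana's lower bound `h(G) = sup_d g(G,d)`. -/
def hB (G : SimpleGraph V) [DecidableRel G.Adj] : ℝ :=
  sSup {r | ∃ d : V → ℝ, r = gB G d}

/-- The `k`-dimensional hypercube graph: vertices are elements of `{0,1}^k`,
adjacent iff they differ in exactly one coordinate. -/
def cube (k : ℕ) : SimpleGraph (Fin k → Bool) where
  Adj x y := (Finset.univ.filter fun i => x i ≠ y i).card = 1
  symm := by
    constructor
    intro x y h
    have hxy : (Finset.univ.filter fun i => y i ≠ x i)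
        = (Finset.univ.filter fun i => x i ≠ y i) := by
      apply Finset.filter_congr
      intro i _
      simp [ne_comm]
    simpa [hxy] using h
  loopless := by
    constructor
    intro x h
    simp at h

instance (k : ℕ) : DecidableRel (cube k).Adj :=
  fun x y =>
    decidable_of_iff ((Finset.univ.filter fun i => x i ≠ y i).card = 1) Iff.rfl


lemma sumprod {k : ℕ} (f : Fin k → Bool → ℝ) :
    ∑ v : Fin k → Bool, ∏ i, f i (v i) = ∏ i, (f i false + f i true) := by
  have := (Fintype.prod_sum (fun (i : Fin k) (b : Bool) => f i b)).symm
  rw [this]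
  congr 1; funext i; simp [Fintype.sum_bool, add_comm]

lemma card_one_iff {k : ℕ} (u v : Fin k → Bool) :
    (Finset.univ.filter fun i => u i ≠ v i).card = 1 ↔
      ∃ i, v = Function.update u i (!(u i)) := by
  rw [Finset.card_eq_one]
  constructor
  · rintro ⟨i, hi⟩
    refine ⟨i, funext fun j => ?_⟩
    by_cases hj : j = i
    · subst hj
      have : j ∈ Finset.univ.filter fun i => u i ≠ v i := by rw [hi]; exact Finset.mem_singleton_self j
      simp only [Finset.mem_filter, Finset.mem_univ, true_and] at this
      rw [Function.update_self]
      cases hu : u j <;> cases hv : v j <;> simp_all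
    · have : j ∉ Finset.univ.filter fun i => u i ≠ v i := by rw [hi]; simp [hj]
      simp only [Finset.mem_filter, Finset.mem_univ, true_and, not_not] at this
      rw [Function.update_of_ne hj, this]
  · rintro ⟨i, rfl⟩
    refine ⟨i, ?_⟩
    ext j
    simp only [Finset.mem_filter, Finset.mem_univ, true_and, Finset.mem_singleton]
    by_cases hj : j = i
    · subst hj; simp
    · simp [Function.update_of_ne hj, hj]

lemma flip_inj {k : ℕ} (u : Fin k → Bool) : Function.Injective (fun i => Function.update u i (!(u i))) := by
  intro i j hij
  by_contra hne
  have h2 := congrFun hij i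
  simp only [Function.update_self, Function.update_of_ne hne] at h2
  exact (Bool.not_ne_self (u i)) h2

lemma neighbor_sum {k : ℕ} (u : Fin k → Bool) (f : (Fin k → Bool) → ℝ) :
    ∑ v, adjA (cube k) u v * f v = ∑ i : Fin k, f (Function.update u i (!(u i))) := by
  have hset : (Finset.univ.filter fun v => (cube k).Adj u v)
      = Finset.image (fun i => Function.update u i (!(u i))) Finset.univ := by
    ext v
    simp only [Finset.mem_filter, Finset.mem_univ, true_and, Finset.mem_image]
    have hadj : (cube k).Adj u v ↔ (Finset.univ.filter fun i => u i ≠ v i).card = 1 := Iff.rfl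
    rw [hadj, card_one_iff]
    constructor
    · rintro ⟨i, rfl⟩; exact ⟨i, rfl⟩
    · rintro ⟨i, h⟩; exact ⟨i, h.symm⟩
  calc ∑ v, adjA (cube k) u v * f v
      = ∑ v ∈ Finset.univ.filter fun v => (cube k).Adj u v, f v := by
        rw [Finset.sum_filter]
        congr 1; funext v
        by_cases h : (cube k).Adj u v <;> simp [adjA, h]
    _ = ∑ i : Fin k, f (Function.update u i (!(u i))) := by
        rw [hset, Finset.sum_image (fun i _ j _ h => flip_inj u h)]

def chi {k : ℕ} (S v : Fin k → Bool) : ℝ := ∏ i, (if S i && v i then (-1 : ℝ) else 1)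

def gg {k : ℕ} (u v : Fin k → Bool) (i : Fin k) (b : Bool) : ℝ :=
  (if b && u i then (-1 : ℝ) else 1) * (if b && v i then (-1 : ℝ) else 1)

lemma chi_mul {k : ℕ} (S u v : Fin k → Bool) :
    chi S u * chi S v = ∏ i, gg u v i (S i) := by
  rw [chi, chi, ← Finset.prod_mul_distrib]; rfl

lemma gg_sum {k : ℕ} (u v : Fin k → Bool) (i : Fin k) :
    gg u v i false + gg u v i true = if u i = v i then 2 else 0 := by
  cases hu : u i <;> cases hv : v i <;> simp [gg, hu, hv] <;> norm_num

lemma orth {k : ℕ} (u v : Fin k → Bool) :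
    ∑ S : Fin k → Bool, chi S u * chi S v = if u = v then (2 : ℝ) ^ k else 0 := by
  simp_rw [chi_mul]
  rw [sumprod (gg u v)]
  simp_rw [gg_sum]
  by_cases h : u = v
  · subst h; simp
  · rw [if_neg h]
    obtain ⟨i, hi⟩ := Function.ne_iff.mp h
    exact Finset.prod_eq_zero (Finset.mem_univ i) (by rw [if_neg hi])

lemma weighted {k : ℕ} (u v : Fin k → Bool) (i : Fin k) :
    ∑ S : Fin k → Bool, (if S i then (1:ℝ) else 0) * (chi S u * chi S v)
      = (if u i = v i then 1 else -1) *
          ∏ j ∈ Finset.univ.erase i, (if u j = v j then (2:ℝ) else 0) := by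
  have key : ∀ S : Fin k → Bool, (if S i then (1:ℝ) else 0) * (chi S u * chi S v)
      = ∏ j, ((if j = i then (if S j then (1:ℝ) else 0) else 1) * gg u v j (S j)) := by
    intro S
    rw [Finset.prod_mul_distrib, Finset.prod_ite_eq' Finset.univ i (fun j => if S j then (1:ℝ) else 0)]
    rw [if_pos (Finset.mem_univ i), chi_mul]
  simp_rw [key]
  rw [sumprod (fun j b => (if j = i then (if b then (1:ℝ) else 0) else 1) * gg u v j b)]
  have hterm : ∀ j : Fin k,
      ((if j = i then (if false then (1:ℝ) else 0) else 1) * gg u v j false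
        + (if j = i then (if true then (1:ℝ) else 0) else 1) * gg u v j true)
      = if j = i then gg u v j true else (if u j = v j then 2 else 0) := by
    intro j
    by_cases hj : j = i
    · rw [if_pos hj, if_pos hj, if_pos hj]
      simp [gg]
    · rw [if_neg hj, if_neg hj, if_neg hj, one_mul, one_mul, gg_sum]
  rw [Finset.prod_congr rfl (fun j _ => hterm j)]
  rw [← Finset.mul_prod_erase Finset.univ _ (Finset.mem_univ i), if_pos rfl]
  have h1 : gg u v i true = if u i = v i then 1 else -1 := by
    cases hu : u i <;> cases hv : v i <;> simp [gg, hu, hv] <;> norm_num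
  rw [h1]
  congr 1
  apply Finset.prod_congr rfl
  intro j hj
  rw [if_neg (Finset.ne_of_mem_erase hj)]

lemma pointwise {k : ℕ} (hk : 1 ≤ k) (u v : Fin k → Bool) :
    ∑ S : Fin k → Bool,
        (2 * ((Finset.univ.filter fun i => S i = true).card : ℝ) - 2) * (chi S u * chi S v)
      = 2 ^ k * (((k : ℝ) - 2) * (if u = v then 1 else 0) - adjA (cube k) u v) := by
  have hcast : ∀ S : Fin k → Bool, ((Finset.univ.filter fun i => S i = true).card : ℝ)
      = ∑ i, (if S i then (1:ℝ) else 0) := by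
    intro S; rw [Finset.card_filter]; push_cast; rfl
  have expand : ∀ S : Fin k → Bool,
      (2 * ((Finset.univ.filter fun i => S i = true).card : ℝ) - 2) * (chi S u * chi S v)
      = 2 * ∑ i, (if S i then (1:ℝ) else 0) * (chi S u * chi S v) - 2 * (chi S u * chi S v) := by
    intro S
    rw [hcast, sub_mul, mul_assoc, Finset.sum_mul]
  rw [Finset.sum_congr rfl (fun S _ => expand S), Finset.sum_sub_distrib, ← Finset.mul_sum,
    ← Finset.mul_sum, Finset.sum_comm, orth]
  rw [Finset.sum_congr rfl (fun i _ => weighted u v i)]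
  by_cases h : u = v
  · subst h
    have h1 : ∀ i : Fin k, (if u i = u i then (1:ℝ) else -1) *
        ∏ j ∈ Finset.univ.erase i, (if u j = u j then (2:ℝ) else 0) = 2 ^ (k - 1) := by
      intro i
      rw [if_pos rfl, one_mul]
      rw [Finset.prod_congr rfl (fun j _ => if_pos rfl), Finset.prod_const,
        Finset.card_erase_of_mem (Finset.mem_univ i), Finset.card_univ]
      congr 1
      simp [Fintype.card_fun]
    rw [Finset.sum_congr rfl (fun i _ => h1 i), Finset.sum_const, Finset.card_univ, Fintype.card_fin]
    have hA : adjA (cube k) u u = 0 := by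
      simp [adjA, (cube k).loopless.irrefl u]
    rw [hA, if_pos rfl]
    simp only [if_true]
    have h2 : (2:ℝ) ^ k = 2 * 2 ^ (k - 1) := by
      rw [← pow_succ']
      congr 1
      omega
    rw [h2]; ring
  · rw [if_neg h, mul_zero, sub_zero, if_neg h, mul_zero, zero_sub]
    set E := Finset.univ.filter fun i => u i ≠ v i with hE
    have hEne : E.Nonempty := by
      obtain ⟨i, hi⟩ := Function.ne_iff.mp h
      exact ⟨i, by simp [hE, hi]⟩
    by_cases hcard : E.card = 1
    · -- adjacent case
      obtain ⟨i₀, hi₀⟩ := Finset.card_eq_one.mp hcard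
      have hi₀E : i₀ ∈ E := hi₀ ▸ Finset.mem_singleton_self i₀
      have hne₀ : u i₀ ≠ v i₀ := by
        have := Finset.mem_filter.mp hi₀E; exact this.2
      have hterm : ∀ i : Fin k, (if u i = v i then (1:ℝ) else -1) *
          ∏ j ∈ Finset.univ.erase i, (if u j = v j then (2:ℝ) else 0)
          = if i = i₀ then -(2:ℝ) ^ (k - 1) else 0 := by
        intro i
        by_cases hii : i = i₀
        · subst hii
          rw [if_pos rfl, if_neg hne₀]
          have : ∀ j ∈ Finset.univ.erase i, (if u j = v j then (2:ℝ) else 0) = 2 := by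
            intro j hj
            have hjne : j ≠ i := Finset.ne_of_mem_erase hj
            have hjE : j ∉ E := by rw [hi₀]; simpa using hjne
            have : u j = v j := by
              by_contra hc
              exact hjE (Finset.mem_filter.mpr ⟨Finset.mem_univ j, hc⟩)
            rw [if_pos this]
          rw [Finset.prod_congr rfl this, Finset.prod_const,
            Finset.card_erase_of_mem (Finset.mem_univ i), Finset.card_univ]
          simp [Fintype.card_fun]
        · rw [if_neg hii]
          have hmem : i₀ ∈ Finset.univ.erase i := Finset.mem_erase.mpr ⟨Ne.symm hii, Finset.mem_univ i₀⟩
          rw [Finset.prod_eq_zero hmem (if_neg hne₀ : (if u i₀ = v i₀ then (2:ℝ) else 0) = 0), mul_zero]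
      rw [Finset.sum_congr rfl (fun i _ => hterm i), Finset.sum_ite_eq' Finset.univ i₀ (fun _ => -(2:ℝ)^(k-1)), if_pos (Finset.mem_univ i₀)]
      have hA : adjA (cube k) u v = 1 := by
        have : (cube k).Adj u v := hcard
        simp [adjA, this]
      rw [hA]
      have h2 : (2:ℝ) ^ k = 2 * 2 ^ (k - 1) := by
        rw [← pow_succ']; congr 1; omega
      rw [h2]; ring
    · -- non-adjacent, distance ≥ 2
      have hA : adjA (cube k) u v = 0 := by
        have : ¬ (cube k).Adj u v := hcard
        simp [adjA, this]
      rw [hA]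
      have h2 : 2 ≤ E.card := by
        rcases hEne with ⟨i, hi⟩
        have : 1 ≤ E.card := Finset.card_pos.mpr ⟨i, hi⟩
        omega
      have hterm : ∀ i : Fin k, (if u i = v i then (1:ℝ) else -1) *
          ∏ j ∈ Finset.univ.erase i, (if u j = v j then (2:ℝ) else 0) = 0 := by
        intro i
        have : (E.erase i).Nonempty := by
          have : 1 ≤ (E.erase i).card := by
            have := Finset.card_erase_of_mem (s := E) (a := i)
            by_cases hiE : i ∈ E
            · rw [Finset.card_erase_of_mem hiE]; omega
            · rw [Finset.erase_eq_of_notMem hiE]; omega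
          exact Finset.card_pos.mp this
        obtain ⟨j, hj⟩ := this
        have hjE : j ∈ E := Finset.mem_of_mem_erase hj
        have hjne : j ≠ i := Finset.ne_of_mem_erase hj
        have hjuv : u j ≠ v j := (Finset.mem_filter.mp hjE).2
        rw [Finset.prod_eq_zero (Finset.mem_erase.mpr ⟨hjne, Finset.mem_univ j⟩) (if_neg hjuv : (if u j = v j then (2:ℝ) else 0) = 0), mul_zero]
      rw [Finset.sum_congr rfl (fun i _ => hterm i), Finset.sum_const_zero]
      ring

lemma quad {k : ℕ} (hk : 1 ≤ k) (x : (Fin k → Bool) → ℝ) :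
    ∑ S : Fin k → Bool,
        (2 * ((Finset.univ.filter fun i => S i = true).card : ℝ) - 2) * (∑ v, chi S v * x v) ^ 2
      = 2 ^ k * (((k : ℝ) - 2) * (∑ v, x v ^ 2)
          - ∑ u, ∑ v, adjA (cube k) u v * (x u * x v)) := by
  have h1 : ∀ S : Fin k → Bool,
      (2 * ((Finset.univ.filter fun i => S i = true).card : ℝ) - 2) * (∑ v, chi S v * x v) ^ 2
      = ∑ u, ∑ v, (x u * x v) *
          ((2 * ((Finset.univ.filter fun i => S i = true).card : ℝ) - 2) * (chi S u * chi S v)) := by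
    intro S
    rw [sq, Finset.sum_mul_sum, Finset.mul_sum]
    apply Finset.sum_congr rfl
    intro u _
    rw [Finset.mul_sum]
    apply Finset.sum_congr rfl
    intro v _
    ring
  rw [Finset.sum_congr rfl (fun S _ => h1 S), Finset.sum_comm]
  have h2 : ∀ u : Fin k → Bool, (∑ S : Fin k → Bool, ∑ v, (x u * x v) *
      ((2 * ((Finset.univ.filter fun i => S i = true).card : ℝ) - 2) * (chi S u * chi S v)))
      = ∑ v, (x u * x v) * (2 ^ k * (((k : ℝ) - 2) * (if u = v then 1 else 0) - adjA (cube k) u v)) := by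
    intro u
    rw [Finset.sum_comm]
    apply Finset.sum_congr rfl
    intro v _
    rw [← Finset.mul_sum, pointwise hk u v]
  rw [Finset.sum_congr rfl (fun u _ => h2 u)]
  have h3 : ∀ u : Fin k → Bool,
      (∑ v, (x u * x v) * (2 ^ k * (((k : ℝ) - 2) * (if u = v then 1 else 0) - adjA (cube k) u v)))
      = 2 ^ k * (((k : ℝ) - 2) * x u ^ 2 - ∑ v, adjA (cube k) u v * (x u * x v)) := by
    intro u
    have hterm : ∀ v : Fin k → Bool,
        (x u * x v) * (2 ^ k * (((k : ℝ) - 2) * (if u = v then 1 else 0) - adjA (cube k) u v))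
        = 2 ^ k * ((k : ℝ) - 2) * (if u = v then x u * x v else 0)
          - 2 ^ k * (adjA (cube k) u v * (x u * x v)) := by
      intro v
      by_cases huv : u = v
      · rw [if_pos huv, if_pos huv]; ring
      · rw [if_neg huv, if_neg huv]; ring
    rw [Finset.sum_congr rfl (fun v _ => hterm v), Finset.sum_sub_distrib,
      ← Finset.mul_sum, ← Finset.mul_sum,
      Finset.sum_ite_eq Finset.univ u (fun v => x u * x v), if_pos (Finset.mem_univ u)]
    ring
  rw [Finset.sum_congr rfl (fun u _ => h3 u), ← Finset.mul_sum, Finset.sum_sub_distrib,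
    ← Finset.mul_sum]

lemma spectral {k : ℕ} (hk : 1 ≤ k) (x : (Fin k → Bool) → ℝ) (hx : ∑ v, x v = 0) :
    ∑ u, ∑ v, adjA (cube k) u v * (x u * x v) ≤ ((k : ℝ) - 2) * ∑ v, x v ^ 2 := by
  have hq := quad hk x
  have hnn : (0:ℝ) ≤ ∑ S : Fin k → Bool,
      (2 * ((Finset.univ.filter fun i => S i = true).card : ℝ) - 2) * (∑ v, chi S v * x v) ^ 2 := by
    apply Finset.sum_nonneg
    intro S _
    by_cases hS : S = fun _ => false
    · have hchi : ∀ v, chi S v = 1 := by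
        intro v; subst hS; simp [chi]
      have : (∑ v, chi S v * x v) = 0 := by
        rw [Finset.sum_congr rfl (fun v _ => by rw [hchi v, one_mul])]; exact hx
      rw [this]
      norm_num
    · have hpos : 1 ≤ (Finset.univ.filter fun i => S i = true).card := by
        rw [Nat.one_le_iff_ne_zero, Ne, Finset.card_eq_zero, Finset.filter_eq_empty_iff]
        intro hall
        apply hS
        funext i
        have := hall (Finset.mem_univ i)
        simpa using this
      have h1 : (0:ℝ) ≤ 2 * ((Finset.univ.filter fun i => S i = true).card : ℝ) - 2 := by
        have : (1:ℝ) ≤ ((Finset.univ.filter fun i => S i = true).card : ℝ) := by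
          exact_mod_cast hpos
        linarith
      exact mul_nonneg h1 (sq_nonneg _)
  rw [hq] at hnn
  have h2k : (0:ℝ) < 2 ^ k := by positivity
  nlinarith [hnn, h2k]

def x0 {k : ℕ} (hk : 1 ≤ k) (v : Fin k → Bool) : ℝ := if v ⟨0, hk⟩ then -1 else 1

lemma x0_pm {k : ℕ} (hk : 1 ≤ k) (v : Fin k → Bool) : x0 hk v = 1 ∨ x0 hk v = -1 := by
  unfold x0; by_cases h : v ⟨0, hk⟩ <;> simp [h]

lemma x0_sq {k : ℕ} (hk : 1 ≤ k) (v : Fin k → Bool) : x0 hk v ^ 2 = 1 := by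
  rcases x0_pm hk v with h | h <;> rw [h] <;> norm_num

lemma x0_ne_zero {k : ℕ} (hk : 1 ≤ k) : x0 hk ≠ 0 := by
  intro h
  have h1 := congrFun h (fun _ => false)
  unfold x0 at h1
  simp at h1

lemma x0_sum {k : ℕ} (hk : 1 ≤ k) : ∑ v, x0 hk v = 0 := by
  have hform : ∀ v : Fin k → Bool, x0 hk v
      = ∏ i, (if i = ⟨0, hk⟩ then (if v i then (-1:ℝ) else 1) else 1) := by
    intro v
    rw [Finset.prod_ite_eq' Finset.univ (⟨0, hk⟩ : Fin k)
      (fun i => if v i then (-1:ℝ) else 1), if_pos (Finset.mem_univ _)]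
    rfl
  rw [Finset.sum_congr rfl (fun v _ => hform v),
    sumprod (fun i b => if i = ⟨0, hk⟩ then (if b then (-1:ℝ) else 1) else 1)]
  apply Finset.prod_eq_zero (Finset.mem_univ (⟨0, hk⟩ : Fin k))
  norm_num

lemma x0_sumsq {k : ℕ} (hk : 1 ≤ k) : ∑ v, x0 hk v ^ 2 = (2:ℝ) ^ k := by
  rw [Finset.sum_congr rfl (fun v _ => x0_sq hk v), Finset.sum_const, Finset.card_univ]
  simp [Fintype.card_fun]

lemma x0_quad {k : ℕ} (hk : 1 ≤ k) :
    ∑ u, ∑ v, adjA (cube k) u v * (x0 hk u * x0 hk v) = ((k:ℝ) - 2) * 2 ^ k := by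
  have hrow : ∀ u : Fin k → Bool, ∑ v, adjA (cube k) u v * (x0 hk u * x0 hk v)
      = x0 hk u * (((k:ℝ) - 2) * x0 hk u) := by
    intro u
    have h1 : ∑ v, adjA (cube k) u v * (x0 hk u * x0 hk v)
        = x0 hk u * ∑ v, adjA (cube k) u v * x0 hk v := by
      rw [Finset.mul_sum]
      exact Finset.sum_congr rfl fun v _ => by ring
    rw [h1, neighbor_sum u (x0 hk)]
    congr 1
    have hflip : ∀ i : Fin k, x0 hk (Function.update u i (!(u i)))
        = if i = ⟨0, hk⟩ then -(x0 hk u) else x0 hk u := by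
      intro i
      by_cases hi : i = ⟨0, hk⟩
      · subst hi
        rw [if_pos rfl]
        unfold x0
        rw [Function.update_self]
        cases h : u ⟨0, hk⟩ <;> simp [h]
      · rw [if_neg hi]
        unfold x0
        rw [Function.update_of_ne (Ne.symm hi)]
    rw [Finset.sum_congr rfl (fun i _ => hflip i)]
    have hsplit : ∀ i : Fin k, (if i = ⟨0, hk⟩ then -(x0 hk u) else x0 hk u)
        = x0 hk u - (if i = ⟨0, hk⟩ then 2 * x0 hk u else 0) := by
      intro i; by_cases hi : i = ⟨0, hk⟩ <;> simp [hi] <;> ring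
    rw [Finset.sum_congr rfl (fun i _ => hsplit i), Finset.sum_sub_distrib, Finset.sum_const,
      Finset.sum_ite_eq' Finset.univ (⟨0, hk⟩ : Fin k) (fun _ => 2 * x0 hk u),
      if_pos (Finset.mem_univ _), Finset.card_univ, Fintype.card_fin]
    push_cast [nsmul_eq_mul]
    ring
  rw [Finset.sum_congr rfl (fun u _ => hrow u)]
  have : ∀ u : Fin k → Bool, x0 hk u * (((k:ℝ) - 2) * x0 hk u) = ((k:ℝ)-2) * x0 hk u ^ 2 := by
    intro u; ring
  rw [Finset.sum_congr rfl (fun u _ => this u), ← Finset.mul_sum, x0_sumsq hk]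

lemma msum_adj {k : ℕ} : msum (adjA (cube k)) = (k : ℝ) * 2 ^ k := by
  unfold msum
  have hrow : ∀ u : Fin k → Bool, ∑ v, adjA (cube k) u v = (k : ℝ) := by
    intro u
    have := neighbor_sum u (fun _ => (1:ℝ))
    simp only [mul_one] at this
    rw [this, Finset.sum_const, Finset.card_univ, Fintype.card_fin, nsmul_eq_mul, mul_one]
  rw [Finset.sum_congr rfl (fun u _ => hrow u), Finset.sum_const, Finset.card_univ]
  simp [Fintype.card_fun, nsmul_eq_mul, mul_comm]

lemma msum_add {V : Type*} [Fintype V] [DecidableEq V] (M N : Matrix V V ℝ) :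
    msum (M + N) = msum M + msum N := by
  unfold msum
  rw [← Finset.sum_add_distrib]
  apply Finset.sum_congr rfl
  intro u _
  rw [← Finset.sum_add_distrib]
  rfl

lemma msum_diag {V : Type*} [Fintype V] [DecidableEq V] (d : V → ℝ) :
    msum (Matrix.diagonal d) = ∑ i, d i := by
  unfold msum
  apply Finset.sum_congr rfl
  intro u _
  rw [Finset.sum_eq_single u (fun v _ hv => Matrix.diagonal_apply_ne' d hv)
    (fun h => absurd (Finset.mem_univ u) h)]
  simp

lemma dot_expand {V : Type*} [Fintype V] [DecidableEq V] (M : Matrix V V ℝ) (x : V → ℝ) :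
    x ⬝ᵥ M.mulVec x = ∑ u, ∑ v, M u v * (x u * x v) := by
  unfold dotProduct Matrix.mulVec
  apply Finset.sum_congr rfl
  intro u _
  show x u * (∑ v, M u v * x v) = _
  rw [Finset.mul_sum]
  apply Finset.sum_congr rfl
  intro v _
  ring

lemma dot_expand_add_diag {V : Type*} [Fintype V] [DecidableEq V] (M : Matrix V V ℝ)
    (d : V → ℝ) (x : V → ℝ) :
    x ⬝ᵥ (M + Matrix.diagonal d).mulVec x
      = (∑ u, ∑ v, M u v * (x u * x v)) + ∑ u, d u * x u ^ 2 := by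
  rw [dot_expand, ← Finset.sum_add_distrib]
  apply Finset.sum_congr rfl
  intro u _
  have : ∀ v, (M + Matrix.diagonal d) u v * (x u * x v)
      = M u v * (x u * x v) + (if u = v then d u * x u ^ 2 else 0) := by
    intro v
    by_cases huv : u = v
    · subst huv
      show (M u u + Matrix.diagonal d u u) * (x u * x u) = _
      rw [Matrix.diagonal_apply_eq, if_pos rfl]
      ring
    · show (M u v + Matrix.diagonal d u v) * (x u * x v) = _
      rw [Matrix.diagonal_apply_ne d huv, if_neg huv]
      ring
  rw [Finset.sum_congr rfl (fun v _ => this v), Finset.sum_add_distrib,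
    Finset.sum_ite_eq Finset.univ u (fun _ => d u * x u ^ 2), if_pos (Finset.mem_univ u)]

lemma lamS_bddAbove {V : Type*} [Fintype V] [DecidableEq V] (B : Matrix V V ℝ) :
    BddAbove {r | ∃ x : V → ℝ, x ≠ 0 ∧ ∑ i, x i = 0 ∧
      r = (x ⬝ᵥ B.mulVec x) / (∑ i, (x i) ^ 2)} := by
  refine ⟨∑ u, ∑ v, |B u v|, ?_⟩
  rintro r ⟨x, hx0, hxs, rfl⟩
  have habs : (0:ℝ) ≤ ∑ u, ∑ v, |B u v| :=
    Finset.sum_nonneg fun u _ => Finset.sum_nonneg fun v _ => abs_nonneg _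
  rcases eq_or_lt_of_le (Finset.sum_nonneg fun v (_ : v ∈ Finset.univ) => sq_nonneg (x v)) with hden | hden
  · rw [← hden, div_zero]; exact habs
  · rw [div_le_iff₀ hden, dot_expand]
    have hterm : ∀ u v : V, B u v * (x u * x v) ≤ |B u v| * ∑ i, (x i) ^ 2 := by
      intro u v
      have h1 : B u v * (x u * x v) ≤ |B u v| * (|x u| * |x v|) := by
        calc B u v * (x u * x v) ≤ |B u v * (x u * x v)| := le_abs_self _
          _ = |B u v| * (|x u| * |x v|) := by rw [abs_mul, abs_mul]
      have h2 : |x u| * |x v| ≤ (x u ^ 2 + x v ^ 2) / 2 := by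
        nlinarith [sq_nonneg (|x u| - |x v|), sq_abs (x u), sq_abs (x v)]
      have h3 : x u ^ 2 ≤ ∑ i, (x i) ^ 2 :=
        Finset.single_le_sum (fun i _ => sq_nonneg (x i)) (Finset.mem_univ u)
      have h4 : x v ^ 2 ≤ ∑ i, (x i) ^ 2 :=
        Finset.single_le_sum (fun i _ => sq_nonneg (x i)) (Finset.mem_univ v)
      have h5 : (x u ^ 2 + x v ^ 2) / 2 ≤ ∑ i, (x i) ^ 2 := by linarith
      calc B u v * (x u * x v) ≤ |B u v| * (|x u| * |x v|) := h1
        _ ≤ |B u v| * ((x u ^ 2 + x v ^ 2) / 2) := by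
            exact mul_le_mul_of_nonneg_left h2 (abs_nonneg _)
        _ ≤ |B u v| * ∑ i, (x i) ^ 2 := mul_le_mul_of_nonneg_left h5 (abs_nonneg _)
    calc ∑ u, ∑ v, B u v * (x u * x v) ≤ ∑ u, ∑ v, |B u v| * ∑ i, (x i) ^ 2 :=
          Finset.sum_le_sum fun u _ => Finset.sum_le_sum fun v _ => hterm u v
      _ = (∑ u, ∑ v, |B u v|) * ∑ i, (x i) ^ 2 := by
          rw [Finset.sum_mul]
          apply Finset.sum_congr rfl
          intro u _
          rw [Finset.sum_mul]

lemma lam0 {k : ℕ} (hk : 1 ≤ k) :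
    lamS (adjA (cube k) + Matrix.diagonal (fun _ => (2:ℝ) - (k:ℝ))) = 0 := by
  apply IsGreatest.csSup_eq
  constructor
  · refine ⟨x0 hk, x0_ne_zero hk, x0_sum hk, ?_⟩
    have hnum : x0 hk ⬝ᵥ (adjA (cube k) + Matrix.diagonal (fun _ => (2:ℝ) - (k:ℝ))).mulVec (x0 hk) = 0 := by
      rw [dot_expand_add_diag, x0_quad hk]
      have : ∑ u, ((2:ℝ) - (k:ℝ)) * x0 hk u ^ 2 = ((2:ℝ) - (k:ℝ)) * ∑ u, x0 hk u ^ 2 := by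
        rw [Finset.mul_sum]
      rw [this, x0_sumsq hk]
      ring
    rw [hnum, zero_div]
  · rintro r ⟨x, hx0, hxs, rfl⟩
    have hnum : x ⬝ᵥ (adjA (cube k) + Matrix.diagonal (fun _ => (2:ℝ) - (k:ℝ))).mulVec x ≤ 0 := by
      rw [dot_expand_add_diag]
      have hs := spectral hk x hxs
      have h2 : ∑ u, ((2:ℝ) - (k:ℝ)) * x u ^ 2 = ((2:ℝ) - (k:ℝ)) * ∑ u, x u ^ 2 := by
        rw [Finset.mul_sum]
      rw [h2]
      linarith
    have hden : (0:ℝ) ≤ ∑ i, (x i) ^ 2 :=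
      Finset.sum_nonneg fun i _ => sq_nonneg _
    exact div_nonpos_iff.mpr (Or.inr ⟨hnum, hden⟩)

lemma card_cube (k : ℕ) : (Fintype.card (Fin k → Bool) : ℝ) = 2 ^ k := by
  simp [Fintype.card_fun]

lemma sum_const_cube (k : ℕ) (c : ℝ) : ∑ _v : Fin k → Bool, c = 2 ^ k * c := by
  rw [Finset.sum_const, Finset.card_univ, nsmul_eq_mul]
  congr 1
  simp [Fintype.card_fun]

lemma gB_val {k : ℕ} (hk : 1 ≤ k) :
    gB (cube k) (fun _ => (2:ℝ) - (k:ℝ)) = (2:ℝ) ^ k / 2 := by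
  unfold gB
  rw [lam0 hk, msum_add, msum_adj, msum_diag, card_cube, sum_const_cube]
  ring

lemma cw_eq {k : ℕ} (x : (Fin k → Bool) → ℝ) :
    cw (cube k) x
      = (msum (adjA (cube k)) - ∑ u, ∑ v, adjA (cube k) u v * (x u * x v)) / 4 := by
  unfold cw msum
  congr 1
  rw [← Finset.sum_sub_distrib]
  apply Finset.sum_congr rfl
  intro u _
  rw [← Finset.sum_sub_distrib]
  apply Finset.sum_congr rfl
  intro v _
  ring

lemma bw_val {k : ℕ} (hk : 1 ≤ k) : bw (cube k) = (2:ℝ) ^ k / 2 := by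
  apply IsLeast.csInf_eq
  constructor
  · refine ⟨x0 hk, ⟨x0_pm hk, x0_sum hk⟩, ?_⟩
    rw [cw_eq, msum_adj, x0_quad hk]
    ring
  · rintro c ⟨x, ⟨hpm, hsum⟩, rfl⟩
    rw [cw_eq, msum_adj]
    have hsq : ∀ v, x v ^ 2 = 1 := by
      intro v; rcases hpm v with h | h <;> rw [h] <;> norm_num
    have hss : ∑ v, x v ^ 2 = (2:ℝ) ^ k := by
      rw [Finset.sum_congr rfl (fun v _ => hsq v), sum_const_cube, mul_one]
    have hsp := spectral hk x hsum
    rw [hss] at hsp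
    have h2k : (0:ℝ) < 2 ^ k := by positivity
    nlinarith [hsp]

lemma gB_le {k : ℕ} (hk : 1 ≤ k) (d : (Fin k → Bool) → ℝ) :
    gB (cube k) d ≤ (2:ℝ) ^ k / 2 := by
  unfold gB
  have h2k : (0:ℝ) < 2 ^ k := by positivity
  have hnum : x0 hk ⬝ᵥ (adjA (cube k) + Matrix.diagonal d).mulVec (x0 hk)
      = ((k:ℝ) - 2) * 2 ^ k + ∑ u, d u := by
    rw [dot_expand_add_diag, x0_quad hk]
    congr 1
    apply Finset.sum_congr rfl
    intro u _
    rw [x0_sq hk u, mul_one]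
  have hmem : (((k:ℝ) - 2) * 2 ^ k + ∑ u, d u) / 2 ^ k
      ∈ {r | ∃ x : (Fin k → Bool) → ℝ, x ≠ 0 ∧ ∑ i, x i = 0 ∧
        r = (x ⬝ᵥ (adjA (cube k) + Matrix.diagonal d).mulVec x) / (∑ i, (x i) ^ 2)} := by
    refine ⟨x0 hk, x0_ne_zero hk, x0_sum hk, ?_⟩
    rw [hnum, x0_sumsq hk]
  have hlam : (((k:ℝ) - 2) * 2 ^ k + ∑ u, d u) / 2 ^ k
      ≤ lamS (adjA (cube k) + Matrix.diagonal d) :=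
    le_csSup (lamS_bddAbove _) hmem
  rw [msum_add, msum_adj, msum_diag, card_cube]
  have hx : 2 ^ k * ((((k:ℝ) - 2) * 2 ^ k + ∑ u, d u) / 2 ^ k)
      = ((k:ℝ) - 2) * 2 ^ k + ∑ u, d u := by
    field_simp
  nlinarith [mul_le_mul_of_nonneg_left hlam (le_of_lt h2k), hx]

lemma hB_val {k : ℕ} (hk : 1 ≤ k) : hB (cube k) = (2:ℝ) ^ k / 2 := by
  apply IsGreatest.csSup_eq
  constructor
  · exact ⟨fun _ => (2:ℝ) - (k:ℝ), (gB_val hk).symm⟩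
  · rintro r ⟨d, rfl⟩
    exact gB_le hk d

/-- for the `k`-dimensional hypercube `H` on `n = 2^k` vertices,
`g(H, (2-k)·𝟙) = n/2`, `h(H) = n/2`, and `bw(H) = n/2`; in particular
`h(H) = bw(H)`. -/
theorem hypercube_h_eq_bw (k : ℕ) (hk : 1 ≤ k) :
    gB (cube k) (fun _ => (2 : ℝ) - (k : ℝ)) = (2 : ℝ) ^ k / 2 ∧
    hB (cube k) = (2 : ℝ) ^ k / 2 ∧
    bw (cube k) = (2 : ℝ) ^ k / 2 ∧
    hB (cube k) = bw (cube k) := by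
  refine ⟨gB_val hk, hB_val hk, bw_val hk, ?_⟩
  rw [hB_val hk, bw_val hk]
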